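/- Fixed-point characterization (Proposition on symmetries): in the periodic FPU chain of 2N+2 sites with translation R: (Q_j) ↦ (Q_{j+1}) acting on mode indices and reflection-type symmetry S: (Q_j, P_j) ↦ (−Q_{2N+2−j}, −P_{2N+2−j}), for any divisor structure κ₀ = (2N+2)/g₀ with g₀ = gcd(q₀, 2N+2), the set Fix(R^{κ₀}) ∩ Fix(S) of mode indices equals {j ∈ [1,N] : g₀ ∣ j}, and this set coincides with the set of folded modes {q̄_k : k ≥ 1} of the q₀-breather cascade. -/
import Mathlib


/-- fixed-point characterization of the q-breather cascade. With
`g₀ = gcd(q₀, 2N+2)`, the set of mode indices of `Fix(R^{κ₀}) ∩ Fix(S)`, namely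
`{j ∈ [1,N] : g₀ ∣ j}`, coincides with the set of folded cascade modes
`{fold(kq₀) : k ≥ 1}` of the `q₀`-breather, where `fold` folds an integer
into `[0, N+1]` modulo `2N+2` up to sign. -/
theorem cascade_modes_eq_divisibility_set
    (N q₀ : ℕ) (hN : 1 ≤ N) (hq1 : 1 ≤ q₀) (hqN : q₀ ≤ N)
    (g₀ : ℕ) (hg : g₀ = Nat.gcd q₀ (2 * N + 2))
    (fold : ℕ → ℕ)
    (hfold : ∀ s, fold s = if s % (2 * N + 2) ≤ N + 1
      then s % (2 * N + 2) else 2 * N + 2 - s % (2 * N + 2)) :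
    {j : ℕ | 1 ≤ j ∧ j ≤ N ∧ g₀ ∣ j}
      = {j : ℕ | 1 ≤ j ∧ j ≤ N ∧ ∃ k, 1 ≤ k ∧ fold (k * q₀) = j} := by
  set M : ℕ := 2 * N + 2 with hM
  have hgq : g₀ ∣ q₀ := hg ▸ Nat.gcd_dvd_left _ _
  have hgM : g₀ ∣ M := hg ▸ Nat.gcd_dvd_right _ _
  have hMpos : 0 < M := by omega
  ext j
  simp only [Set.mem_setOf_eq]
  constructor
  · rintro ⟨h1, h2, m, hm⟩
    refine ⟨h1, h2, ?_⟩
    -- Bézout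
    have hbez : (g₀ : ℤ) = q₀ * Nat.gcdA q₀ M + M * Nat.gcdB q₀ M := by
      rw [hg]; exact Nat.gcd_eq_gcd_ab q₀ M
    set a : ℤ := Nat.gcdA q₀ M
    -- choose k ≡ m * a mod M, k ≥ 1
    set k : ℕ := ((m * a) % (M : ℤ) + M).toNat with hk
    have hk0 : (0:ℤ) ≤ (m * a) % (M : ℤ) := Int.emod_nonneg _ (by exact_mod_cast hMpos.ne')
    have hkcast : (k : ℤ) = (m * a) % (M : ℤ) + M := by
      rw [hk, Int.toNat_of_nonneg (by linarith [hk0, (by exact_mod_cast hMpos : (0:ℤ) < M)])]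
    have hk1 : 1 ≤ k := by
      have : (1:ℤ) ≤ (k:ℤ) := by
        rw [hkcast]; have : (0:ℤ) < M := by exact_mod_cast hMpos
        linarith
      exact_mod_cast this
    refine ⟨k, hk1, ?_⟩
    -- k * q₀ ≡ j mod M over ℤ
    have hcong : ((k * q₀ : ℕ) : ℤ) % M = ((j : ℕ) : ℤ) % M := by
      have h1 : ((k * q₀ : ℕ) : ℤ) % M = (m * a * q₀) % M := by
        rw [Nat.cast_mul, hkcast]
        have : ((m * a) % (M:ℤ) + M) * q₀ = (m*a) % (M:ℤ) * q₀ + q₀ * M := by ring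
        rw [this, Int.add_mul_emod_self_right]
        conv_rhs => rw [show (m:ℤ) * a * q₀ = (m*a) * q₀ by ring]
        rw [Int.mul_emod, Int.emod_emod_of_dvd, ← Int.mul_emod]
        exact dvd_refl _
      have h2 : ((j : ℕ) : ℤ) % M = (m * a * q₀) % M := by
        have hj : (j : ℤ) = m * (q₀ * a + M * Nat.gcdB q₀ M) := by
          rw [← hbez, mul_comm]; exact_mod_cast congrArg (Nat.cast : ℕ → ℤ) hm
        rw [hj]
        have : (m:ℤ) * (q₀ * a + M * Nat.gcdB q₀ M) = m * a * q₀ + (m * Nat.gcdB q₀ M) * M := by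
          ring
        rw [this, Int.add_mul_emod_self_right]
      rw [h1, h2]
    have hmodnat : (k * q₀) % M = j % M := by
      have := hcong
      rw [← Int.natCast_mod, ← Int.natCast_mod] at this
      exact_mod_cast this
    have hjlt : j % M = j := Nat.mod_eq_of_lt (by omega)
    rw [hfold, hmodnat, hjlt, if_pos (by omega)]
  · rintro ⟨h1, h2, k, hk1, hkf⟩
    refine ⟨h1, h2, ?_⟩
    have hdvd : g₀ ∣ (k * q₀) % M := (Nat.dvd_mod_iff hgM).mpr (Dvd.dvd.mul_left hgq k)
    rw [hfold] at hkf
    split_ifs at hkf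
    · exact hkf ▸ hdvd
    · exact hkf ▸ Nat.dvd_sub hgM hdvd
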